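/- Elimination of global disjunction: for every formula φ of PFO there exists a formula φ' of PFO using only local disjunctions ∨ⁱ (and no global disjunction ∨) such that φ and φ' are equivalent, i.e., for every structure 𝔄 and every polyteam X⃗ of 𝔄 whose domains contain the free variables of φ and φ', 𝔄 ⊨_X⃗ φ if and only if 𝔄 ⊨_X⃗ φ'. -/

import Mathlib

universe u

/-- A team over `A` for a given sort: a set of assignments of the (natural
number indexed) variables of that sort. -/
abbrev Team (A : Type) : Type := Set (ℕ → A)

/-- A polyteam over `A`: a team for every sort `i ∈ ℕ`. -/
abbrev PolyTeam (A : Type) : Type := ℕ → Team A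

/-- Replace the `i`-th team of a polyteam. -/
def PolyTeam.upd {A : Type} (X : PolyTeam A) (i : ℕ) (T : Team A) : PolyTeam A :=
  fun k => if k = i then T else X k

/-- `T.sup x = T[A/x]`, the universal supplementation of `T` at `x`. -/
def Team.sup {A : Type} (T : Team A) (x : ℕ) : Team A :=
  {t | ∃ s ∈ T, ∃ a : A, t = Function.update s x a}

/-- `T.supF x F = T[F/x]`, the (lax) existential supplementation of `T` at `x`
along the choice function `F`. -/
def Team.supF {A : Type} (T : Team A) (x : ℕ) (F : (ℕ → A) → Set A) : Team A :=
  {t | ∃ s ∈ T, ∃ a ∈ F s, t = Function.update s x a}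

/-- A `τ`-structure with domain `A`, where the vocabulary `τ` comes with an
arity function `ar`. -/
structure Struc (τ : Type) (ar : τ → ℕ) (A : Type) : Type where
  interp : (r : τ) → (Fin (ar r) → A) → Prop

/-- Syntax of poly first-order logic `PFO(τ)` extended with atoms from `Atom`.
Every variable is a pair of a sort `i : ℕ` (recorded in the constructor) and a
natural number; all variables of an atomic subformula have a single common
sort.  `or` is the global disjunction `∨`, and `lor j` is the local
disjunction `∨ʲ`. -/
inductive PFO (τ : Type) (ar : τ → ℕ) (Atom : Type u) : Type u where
  | atom : Atom → PFO τ ar Atom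
  | eq : (i : ℕ) → ℕ → ℕ → PFO τ ar Atom
  | neq : (i : ℕ) → ℕ → ℕ → PFO τ ar Atom
  | rel : (r : τ) → (i : ℕ) → (Fin (ar r) → ℕ) → PFO τ ar Atom
  | nrel : (r : τ) → (i : ℕ) → (Fin (ar r) → ℕ) → PFO τ ar Atom
  | and : PFO τ ar Atom → PFO τ ar Atom → PFO τ ar Atom
  | or : PFO τ ar Atom → PFO τ ar Atom → PFO τ ar Atom
  | lor : ℕ → PFO τ ar Atom → PFO τ ar Atom → PFO τ ar Atom
  | ex : (i : ℕ) → (x : ℕ) → PFO τ ar Atom → PFO τ ar Atom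
  | all : (i : ℕ) → (x : ℕ) → PFO τ ar Atom → PFO τ ar Atom

/-- Lax polyteam semantics of `PFO` with atoms `Atom`, whose satisfaction
relation on polyteams is given by `AS`. -/
def PFO.Sat {τ : Type} {ar : τ → ℕ} {Atom : Type u} {A : Type}
    (AS : PolyTeam A → Atom → Prop) (M : Struc τ ar A) :
    PFO τ ar Atom → PolyTeam A → Prop
  | .atom a, X => AS X a
  | .eq i x y, X => ∀ s ∈ X i, s x = s y
  | .neq i x y, X => ∀ s ∈ X i, s x ≠ s y
  | .rel r i vs, X => ∀ s ∈ X i, M.interp r (fun k => s (vs k))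
  | .nrel r i vs, X => ∀ s ∈ X i, ¬ M.interp r (fun k => s (vs k))
  | .and φ ψ, X => PFO.Sat AS M φ X ∧ PFO.Sat AS M ψ X
  | .or φ ψ, X => ∃ Y Z : PolyTeam A,
      (∀ k, Y k ∪ Z k = X k) ∧ PFO.Sat AS M φ Y ∧ PFO.Sat AS M ψ Z
  | .lor j φ ψ, X => ∃ Y Z : Team A, Y ∪ Z = X j ∧
      PFO.Sat AS M φ (X.upd j Y) ∧ PFO.Sat AS M ψ (X.upd j Z)
  | .ex i x φ, X => ∃ F : (ℕ → A) → Set A, (∀ s ∈ X i, (F s).Nonempty) ∧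
      PFO.Sat AS M φ (X.upd i ((X i).supF x F))
  | .all i x φ, X => PFO.Sat AS M φ (X.upd i ((X i).sup x))

/-- Free variables of each sort, given the free variables of atoms. -/
def PFO.fv {τ : Type} {ar : τ → ℕ} {Atom : Type u} (afv : Atom → ℕ → Set ℕ) :
    PFO τ ar Atom → ℕ → Set ℕ
  | .atom a => afv a
  | .eq i x y => fun k => if k = i then {x, y} else ∅
  | .neq i x y => fun k => if k = i then {x, y} else ∅
  | .rel _ i vs => fun k => if k = i then Set.range vs else ∅
  | .nrel _ i vs => fun k => if k = i then Set.range vs else ∅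
  | .and φ ψ => fun k => PFO.fv afv φ k ∪ PFO.fv afv ψ k
  | .or φ ψ => fun k => PFO.fv afv φ k ∪ PFO.fv afv ψ k
  | .lor _ φ ψ => fun k => PFO.fv afv φ k ∪ PFO.fv afv ψ k
  | .ex i x φ => fun k => PFO.fv afv φ k \ (if k = i then {x} else ∅)
  | .all i x φ => fun k => PFO.fv afv φ k \ (if k = i then {x} else ∅)

/-- Atom satisfaction for the empty collection of extra atoms. -/
def noAtoms {A : Type} : PolyTeam A → Empty → Prop := fun _ a => a.elim

/-- Free variables of the (nonexistent) atoms of pure `PFO`. -/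
def noAtomsFv : Empty → ℕ → Set ℕ := fun a => a.elim

/-- `φ.noGlobalOr` : the formula uses only local disjunctions `∨ⁱ` (no global
disjunction `∨`). -/
def PFO.noGlobalOr {τ : Type} {ar : τ → ℕ} {Atom : Type u} :
    PFO τ ar Atom → Prop
  | .atom _ => True
  | .eq _ _ _ => True
  | .neq _ _ _ => True
  | .rel _ _ _ => True
  | .nrel _ _ _ => True
  | .and φ ψ => PFO.noGlobalOr φ ∧ PFO.noGlobalOr ψ
  | .or _ _ => False
  | .lor _ φ ψ => PFO.noGlobalOr φ ∧ PFO.noGlobalOr ψ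
  | .ex _ _ φ => PFO.noGlobalOr φ
  | .all _ _ φ => PFO.noGlobalOr φ

/-! ### Auxiliary machinery for eliminating global disjunction -/

/-- Keep only the `i`-th team, emptying all other teams. -/
def PolyTeam.only {A : Type} (X : PolyTeam A) (i : ℕ) : PolyTeam A :=
  fun k => if k = i then X k else ∅

lemma PolyTeam.only_self {A : Type} (X : PolyTeam A) (i : ℕ) :
    X.only i i = X i := by simp [PolyTeam.only]

lemma PolyTeam.only_ne {A : Type} (X : PolyTeam A) {k i : ℕ} (h : k ≠ i) :
    X.only i k = ∅ := by simp [PolyTeam.only, h]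

lemma PolyTeam.upd_self_apply {A : Type} (X : PolyTeam A) (i : ℕ) (T : Team A) :
    X.upd i T i = T := by simp [PolyTeam.upd]

lemma PolyTeam.upd_only_self {A : Type} (X : PolyTeam A) (i : ℕ) (T : Team A) :
    (X.upd i T).only i = (X.only i).upd i T := by
  funext k; by_cases h : k = i <;> simp [PolyTeam.only, PolyTeam.upd, h]

lemma PolyTeam.upd_only_ne {A : Type} (X : PolyTeam A) {i j : ℕ} (T : Team A) (h : i ≠ j) :
    (X.upd j T).only i = X.only i := by
  funext k; by_cases hk : k = i <;> simp [PolyTeam.only, PolyTeam.upd, hk, h]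

lemma PolyTeam.only_upd_empty {A : Type} (X : PolyTeam A) {i j : ℕ} (h : j ≠ i) :
    (X.only i).upd j ∅ = X.only i := by
  funext k
  by_cases hk : k = j
  · subst hk; simp [PolyTeam.upd, PolyTeam.only, h]
  · simp [PolyTeam.upd, hk]

lemma PolyTeam.upd_self {A : Type} (X : PolyTeam A) (j : ℕ) :
    X.upd j (X j) = X := by
  funext k; by_cases hk : k = j <;> simp [PolyTeam.upd, hk]

lemma PolyTeam.upd_only_eq {A : Type} (X Y : PolyTeam A) (i : ℕ) :
    (X.upd i (Y i)).only i = Y.only i := by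
  funext k
  by_cases hk : k = i
  · subst hk; rw [PolyTeam.only_self, PolyTeam.only_self, PolyTeam.upd_self_apply]
  · rw [PolyTeam.only_ne _ hk, PolyTeam.only_ne _ hk]

lemma Team.supF_empty {A : Type} (x : ℕ) (F : (ℕ → A) → Set A) :
    (∅ : Team A).supF x F = ∅ := by
  ext t; simp [Team.supF]

lemma Team.sup_empty {A : Type} (x : ℕ) :
    (∅ : Team A).sup x = ∅ := by
  ext t; simp [Team.sup]

/-- The sorts occurring in a formula. -/
def PFO.sorts {τ : Type} {ar : τ → ℕ} {Atom : Type u} : PFO τ ar Atom → List ℕ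
  | .atom _ => []
  | .eq i _ _ => [i]
  | .neq i _ _ => [i]
  | .rel _ i _ => [i]
  | .nrel _ i _ => [i]
  | .and φ ψ => φ.sorts ++ ψ.sorts
  | .or φ ψ => φ.sorts ++ ψ.sorts
  | .lor j φ ψ => j :: (φ.sorts ++ ψ.sorts)
  | .ex i _ φ => i :: φ.sorts
  | .all i _ φ => i :: φ.sorts

/-- Any formula is satisfied by a polyteam which is empty at all sorts of the
formula. -/
lemma sat_empty {τ : Type} {ar : τ → ℕ} {A : Type} (M : Struc τ ar A) :
    ∀ (θ : PFO τ ar Empty) (X : PolyTeam A),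
      (∀ k ∈ θ.sorts, X k = ∅) → PFO.Sat noAtoms M θ X := by
  intro θ
  induction θ with
  | atom a => exact a.elim
  | eq i x y =>
      intro X h s hs
      rw [h i (by simp [PFO.sorts])] at hs
      exact absurd hs (Set.notMem_empty s)
  | neq i x y =>
      intro X h s hs
      rw [h i (by simp [PFO.sorts])] at hs
      exact absurd hs (Set.notMem_empty s)
  | rel r i vs =>
      intro X h s hs
      rw [h i (by simp [PFO.sorts])] at hs
      exact absurd hs (Set.notMem_empty s)
  | nrel r i vs =>
      intro X h s hs
      rw [h i (by simp [PFO.sorts])] at hs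
      exact absurd hs (Set.notMem_empty s)
  | and φ ψ ihφ ihψ =>
      intro X h
      exact ⟨ihφ X (fun k hk => h k (by simp [PFO.sorts]; exact Or.inl hk)),
             ihψ X (fun k hk => h k (by simp [PFO.sorts]; exact Or.inr hk))⟩
  | or φ ψ ihφ ihψ =>
      intro X h
      exact ⟨X, X, fun k => Set.union_self _,
             ihφ X (fun k hk => h k (by simp [PFO.sorts]; exact Or.inl hk)),
             ihψ X (fun k hk => h k (by simp [PFO.sorts]; exact Or.inr hk))⟩
  | lor j φ ψ ihφ ihψ =>
      intro X h
      refine ⟨X j, X j, Set.union_self _, ?_, ?_⟩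
      · rw [PolyTeam.upd_self]
        exact ihφ X (fun k hk => h k (by simp [PFO.sorts]; exact Or.inr (Or.inl hk)))
      · rw [PolyTeam.upd_self]
        exact ihψ X (fun k hk => h k (by simp [PFO.sorts]; exact Or.inr (Or.inr hk)))
  | ex j x φ ihφ =>
      intro X h
      refine ⟨fun _ => ∅, ?_, ?_⟩
      · intro s hs
        rw [h j (by simp [PFO.sorts])] at hs
        exact absurd hs (Set.notMem_empty s)
      · rw [h j (by simp [PFO.sorts]), Team.supF_empty]
        apply ihφ
        intro k hk
        by_cases hkj : k = j
        · subst hkj; rw [PolyTeam.upd_self_apply]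
        · rw [show (X.upd j ∅) k = X k by simp [PolyTeam.upd, hkj]]
          exact h k (by simp [PFO.sorts]; exact Or.inr hk)
  | all j x φ ihφ =>
      intro X h
      simp only [PFO.Sat]
      rw [h j (by simp [PFO.sorts]), Team.sup_empty]
      apply ihφ
      intro k hk
      by_cases hkj : k = j
      · subst hkj; rw [PolyTeam.upd_self_apply]
      · rw [show (X.upd j ∅) k = X k by simp [PolyTeam.upd, hkj]]
        exact h k (by simp [PFO.sorts]; exact Or.inr hk)

lemma forall_only_iff {A : Type} (X : PolyTeam A) (i : ℕ) (P : (ℕ → A) → Prop) :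
    (∀ s ∈ X i, P s) ↔ ∀ k, ∀ s ∈ (X.only k) i, P s := by
  constructor
  · intro h k s hs
    by_cases hk : i = k
    · subst hk; rw [PolyTeam.only_self] at hs; exact h s hs
    · rw [PolyTeam.only_ne X hk] at hs
      exact absurd hs (Set.notMem_empty s)
  · intro h s hs
    exact h i s (by rw [PolyTeam.only_self]; exact hs)

/-- The product property of formulas without global disjunction: satisfaction
decomposes sort by sort. -/
lemma sat_only {τ : Type} {ar : τ → ℕ} {A : Type} (M : Struc τ ar A) :
    ∀ (θ : PFO τ ar Empty), θ.noGlobalOr →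
      ∀ X : PolyTeam A,
        PFO.Sat noAtoms M θ X ↔ ∀ i, PFO.Sat noAtoms M θ (X.only i) := by
  intro θ
  induction θ with
  | atom a => exact a.elim
  | eq i x y => intro _ X; exact forall_only_iff X i _
  | neq i x y => intro _ X; exact forall_only_iff X i _
  | rel r i vs => intro _ X; exact forall_only_iff X i _
  | nrel r i vs => intro _ X; exact forall_only_iff X i _
  | and φ ψ ihφ ihψ =>
      rintro ⟨hφ, hψ⟩ X
      simp only [PFO.Sat]
      rw [ihφ hφ X, ihψ hψ X]
      exact forall_and.symm
  | or φ ψ ihφ ihψ => rintro ⟨⟩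
  | lor j φ ψ ihφ ihψ =>
      rintro ⟨hφ, hψ⟩ X
      simp only [PFO.Sat]
      constructor
      · rintro ⟨Y, Z, hYZ, hY, hZ⟩ i
        by_cases hij : i = j
        · subst hij
          refine ⟨Y, Z, by rw [PolyTeam.only_self]; exact hYZ, ?_, ?_⟩
          · rw [← PolyTeam.upd_only_self]; exact (ihφ hφ _).mp hY i
          · rw [← PolyTeam.upd_only_self]; exact (ihψ hψ _).mp hZ i
        · refine ⟨∅, ∅, by rw [PolyTeam.only_ne X (Ne.symm hij)]; simp, ?_, ?_⟩
          · rw [PolyTeam.only_upd_empty X (Ne.symm hij), ← PolyTeam.upd_only_ne X Y hij]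
            exact (ihφ hφ _).mp hY i
          · rw [PolyTeam.only_upd_empty X (Ne.symm hij), ← PolyTeam.upd_only_ne X Z hij]
            exact (ihψ hψ _).mp hZ i
      · intro h
        obtain ⟨Y, Z, hYZ, hY, hZ⟩ := h j
        rw [PolyTeam.only_self] at hYZ
        refine ⟨Y, Z, hYZ, ?_, ?_⟩
        · apply (ihφ hφ _).mpr
          intro i
          by_cases hij : i = j
          · subst hij; rw [PolyTeam.upd_only_self]; exact hY
          · rw [PolyTeam.upd_only_ne X Y hij]
            obtain ⟨Y', Z', hYZ', hY', _⟩ := h i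
            rw [PolyTeam.only_ne X (Ne.symm hij)] at hYZ'
            rw [(Set.union_empty_iff.mp hYZ').1,
                PolyTeam.only_upd_empty X (Ne.symm hij)] at hY'
            exact hY'
        · apply (ihψ hψ _).mpr
          intro i
          by_cases hij : i = j
          · subst hij; rw [PolyTeam.upd_only_self]; exact hZ
          · rw [PolyTeam.upd_only_ne X Z hij]
            obtain ⟨Y', Z', hYZ', _, hZ'⟩ := h i
            rw [PolyTeam.only_ne X (Ne.symm hij)] at hYZ'
            rw [(Set.union_empty_iff.mp hYZ').2,
                PolyTeam.only_upd_empty X (Ne.symm hij)] at hZ'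
            exact hZ'
  | ex j x φ ihφ =>
      intro hφ X
      simp only [PFO.Sat]
      constructor
      · rintro ⟨F, hF, hsat⟩ i
        by_cases hij : i = j
        · subst hij
          refine ⟨F, by rw [PolyTeam.only_self]; exact hF, ?_⟩
          rw [PolyTeam.only_self, ← PolyTeam.upd_only_self]
          exact (ihφ hφ _).mp hsat i
        · refine ⟨fun _ => ∅, ?_, ?_⟩
          · intro s hs
            rw [PolyTeam.only_ne X (Ne.symm hij)] at hs
            exact absurd hs (Set.notMem_empty s)
          · rw [PolyTeam.only_ne X (Ne.symm hij), Team.supF_empty,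
                PolyTeam.only_upd_empty X (Ne.symm hij), ← PolyTeam.upd_only_ne X _ hij]
            exact (ihφ hφ _).mp hsat i
      · intro h
        obtain ⟨F, hF, hsat⟩ := h j
        rw [PolyTeam.only_self] at hF hsat
        refine ⟨F, hF, ?_⟩
        apply (ihφ hφ _).mpr
        intro i
        by_cases hij : i = j
        · subst hij; rw [PolyTeam.upd_only_self]; exact hsat
        · rw [PolyTeam.upd_only_ne X _ hij]
          obtain ⟨F', _, hsat'⟩ := h i
          rw [PolyTeam.only_ne X (Ne.symm hij), Team.supF_empty,
              PolyTeam.only_upd_empty X (Ne.symm hij)] at hsat'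
          exact hsat'
  | all j x φ ihφ =>
      intro hφ X
      simp only [PFO.Sat]
      constructor
      · intro hsat i
        by_cases hij : i = j
        · subst hij
          rw [PolyTeam.only_self, ← PolyTeam.upd_only_self]
          exact (ihφ hφ _).mp hsat i
        · rw [PolyTeam.only_ne X (Ne.symm hij), Team.sup_empty,
              PolyTeam.only_upd_empty X (Ne.symm hij), ← PolyTeam.upd_only_ne X _ hij]
          exact (ihφ hφ _).mp hsat i
      · intro h
        have hsat := h j
        rw [PolyTeam.only_self] at hsat
        apply (ihφ hφ _).mpr
        intro i
        by_cases hij : i = j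
        · subst hij; rw [PolyTeam.upd_only_self]; exact hsat
        · rw [PolyTeam.upd_only_ne X _ hij]
          have hsat' := h i
          rw [PolyTeam.only_ne X (Ne.symm hij), Team.sup_empty,
              PolyTeam.only_upd_empty X (Ne.symm hij)] at hsat'
          exact hsat'

/-- Relativization of a formula to the sort `i`: all atoms of other sorts are
replaced by a trivially true atom. -/
def PFO.relv {τ : Type} {ar : τ → ℕ} (i : ℕ) : PFO τ ar Empty → PFO τ ar Empty
  | .atom a => a.elim
  | .eq k x y => if k = i then .eq k x y else .eq k x x
  | .neq k x y => if k = i then .neq k x y else .eq k x x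
  | .rel r k vs => if k = i then .rel r k vs else .eq k 0 0
  | .nrel r k vs => if k = i then .nrel r k vs else .eq k 0 0
  | .and φ ψ => .and (PFO.relv i φ) (PFO.relv i ψ)
  | .or φ ψ => .or (PFO.relv i φ) (PFO.relv i ψ)
  | .lor j φ ψ => .lor j (PFO.relv i φ) (PFO.relv i ψ)
  | .ex k x φ => .ex k x (PFO.relv i φ)
  | .all k x φ => .all k x (PFO.relv i φ)

lemma relv_noGlobalOr {τ : Type} {ar : τ → ℕ} (i : ℕ) :
    ∀ θ : PFO τ ar Empty, θ.noGlobalOr → (PFO.relv i θ).noGlobalOr := by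
  intro θ
  induction θ with
  | atom a => exact a.elim
  | eq k x y => intro _; by_cases hk : k = i <;> simp [PFO.relv, PFO.noGlobalOr, hk]
  | neq k x y => intro _; by_cases hk : k = i <;> simp [PFO.relv, PFO.noGlobalOr, hk]
  | rel r k vs => intro _; by_cases hk : k = i <;> simp [PFO.relv, PFO.noGlobalOr, hk]
  | nrel r k vs => intro _; by_cases hk : k = i <;> simp [PFO.relv, PFO.noGlobalOr, hk]
  | and φ ψ ihφ ihψ => rintro ⟨h1, h2⟩; exact ⟨ihφ h1, ihψ h2⟩
  | or φ ψ ihφ ihψ => rintro ⟨⟩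
  | lor j φ ψ ihφ ihψ => rintro ⟨h1, h2⟩; exact ⟨ihφ h1, ihψ h2⟩
  | ex k x φ ihφ => intro h; exact ihφ h
  | all k x φ ihφ => intro h; exact ihφ h

/-- The relativization of `θ` to sort `i` expresses satisfaction of `θ` by the
polyteam where all teams other than the `i`-th have been emptied. -/
lemma sat_relv {τ : Type} {ar : τ → ℕ} {A : Type} (M : Struc τ ar A) (i : ℕ) :
    ∀ (θ : PFO τ ar Empty) (X : PolyTeam A),
      PFO.Sat noAtoms M (PFO.relv i θ) X ↔ PFO.Sat noAtoms M θ (X.only i) := by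
  intro θ
  induction θ with
  | atom a => exact a.elim
  | eq k x y =>
      intro X
      by_cases hk : k = i
      · subst hk
        simp only [PFO.relv, if_pos rfl, ↓reduceIte, PFO.Sat, PolyTeam.only_self]
      · simp only [PFO.relv, if_neg hk, PFO.Sat, PolyTeam.only_ne X hk]
        simp
  | neq k x y =>
      intro X
      by_cases hk : k = i
      · subst hk
        simp only [PFO.relv, if_pos rfl, ↓reduceIte, PFO.Sat, PolyTeam.only_self]
      · simp only [PFO.relv, if_neg hk, PFO.Sat, PolyTeam.only_ne X hk]
        simp
  | rel r k vs =>
      intro X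
      by_cases hk : k = i
      · subst hk
        simp only [PFO.relv, if_pos rfl, ↓reduceIte, PFO.Sat, PolyTeam.only_self]
      · simp only [PFO.relv, if_neg hk, PFO.Sat, PolyTeam.only_ne X hk]
        simp
  | nrel r k vs =>
      intro X
      by_cases hk : k = i
      · subst hk
        simp only [PFO.relv, if_pos rfl, ↓reduceIte, PFO.Sat, PolyTeam.only_self]
      · simp only [PFO.relv, if_neg hk, PFO.Sat, PolyTeam.only_ne X hk]
        simp
  | and φ ψ ihφ ihψ =>
      intro X
      simp only [PFO.relv, PFO.Sat]
      rw [ihφ X, ihψ X]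
  | or φ ψ ihφ ihψ =>
      intro X
      simp only [PFO.relv, PFO.Sat]
      constructor
      · rintro ⟨Y, Z, hcov, hY, hZ⟩
        refine ⟨Y.only i, Z.only i, ?_, (ihφ Y).mp hY, (ihψ Z).mp hZ⟩
        intro k
        by_cases hk : k = i
        · subst hk
          rw [PolyTeam.only_self, PolyTeam.only_self, PolyTeam.only_self]
          exact hcov k
        · rw [PolyTeam.only_ne Y hk, PolyTeam.only_ne Z hk, PolyTeam.only_ne X hk]
          simp
      · rintro ⟨Y, Z, hcov, hY, hZ⟩
        refine ⟨fun k => if k = i then Y i else X k,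
                fun k => if k = i then Z i else X k, ?_, ?_, ?_⟩
        · intro k
          by_cases hk : k = i
          · subst hk
            simp only [if_pos rfl]
            have := hcov k
            rwa [PolyTeam.only_self] at this
          · simp only [if_neg hk]
            exact Set.union_self _
        · apply (ihφ _).mpr
          have hYeq : (PolyTeam.only (fun k => if k = i then Y i else X k) i) = Y := by
            funext k
            by_cases hk : k = i
            · subst hk
              rw [PolyTeam.only_self]
              simp
            · rw [PolyTeam.only_ne _ hk]
              have := hcov k
              rw [PolyTeam.only_ne X hk] at this
              exact ((Set.union_empty_iff.mp this).1).symm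
          rw [hYeq]; exact hY
        · apply (ihψ _).mpr
          have hZeq : (PolyTeam.only (fun k => if k = i then Z i else X k) i) = Z := by
            funext k
            by_cases hk : k = i
            · subst hk
              rw [PolyTeam.only_self]
              simp
            · rw [PolyTeam.only_ne _ hk]
              have := hcov k
              rw [PolyTeam.only_ne X hk] at this
              exact ((Set.union_empty_iff.mp this).2).symm
          rw [hZeq]; exact hZ
  | lor j φ ψ ihφ ihψ =>
      intro X
      simp only [PFO.relv, PFO.Sat]
      by_cases hj : j = i
      · subst hj
        constructor
        · rintro ⟨Y, Z, hYZ, hY, hZ⟩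
          refine ⟨Y, Z, by rw [PolyTeam.only_self]; exact hYZ, ?_, ?_⟩
          · have := (ihφ _).mp hY; rwa [PolyTeam.upd_only_self] at this
          · have := (ihψ _).mp hZ; rwa [PolyTeam.upd_only_self] at this
        · rintro ⟨Y, Z, hYZ, hY, hZ⟩
          rw [PolyTeam.only_self] at hYZ
          refine ⟨Y, Z, hYZ, ?_, ?_⟩
          · apply (ihφ _).mpr; rw [PolyTeam.upd_only_self]; exact hY
          · apply (ihψ _).mpr; rw [PolyTeam.upd_only_self]; exact hZ
      · constructor
        · rintro ⟨Y, Z, hYZ, hY, hZ⟩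
          refine ⟨∅, ∅, by rw [PolyTeam.only_ne X hj]; simp, ?_, ?_⟩
          · rw [PolyTeam.only_upd_empty X hj, ← PolyTeam.upd_only_ne X Y (Ne.symm hj)]
            exact (ihφ _).mp hY
          · rw [PolyTeam.only_upd_empty X hj, ← PolyTeam.upd_only_ne X Z (Ne.symm hj)]
            exact (ihψ _).mp hZ
        · rintro ⟨Y, Z, hYZ, hY, hZ⟩
          rw [PolyTeam.only_ne X hj] at hYZ
          refine ⟨X j, X j, Set.union_self _, ?_, ?_⟩
          · apply (ihφ _).mpr
            rw [PolyTeam.upd_self]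
            rw [(Set.union_empty_iff.mp hYZ).1, PolyTeam.only_upd_empty X hj] at hY
            exact hY
          · apply (ihψ _).mpr
            rw [PolyTeam.upd_self]
            rw [(Set.union_empty_iff.mp hYZ).2, PolyTeam.only_upd_empty X hj] at hZ
            exact hZ
  | ex k x φ ihφ =>
      intro X
      simp only [PFO.relv, PFO.Sat]
      by_cases hk : k = i
      · subst hk
        constructor
        · rintro ⟨F, hF, hsat⟩
          refine ⟨F, by rw [PolyTeam.only_self]; exact hF, ?_⟩
          rw [PolyTeam.only_self, ← PolyTeam.upd_only_self]
          exact (ihφ _).mp hsat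
        · rintro ⟨F, hF, hsat⟩
          rw [PolyTeam.only_self] at hF hsat
          exact ⟨F, hF, (ihφ _).mpr (by rw [PolyTeam.upd_only_self]; exact hsat)⟩
      · constructor
        · rintro ⟨F, hF, hsat⟩
          refine ⟨fun _ => ∅, ?_, ?_⟩
          · intro s hs
            rw [PolyTeam.only_ne X hk] at hs
            exact absurd hs (Set.notMem_empty s)
          · rw [PolyTeam.only_ne X hk, Team.supF_empty, PolyTeam.only_upd_empty X hk,
                ← PolyTeam.upd_only_ne X _ (Ne.symm hk)]
            exact (ihφ _).mp hsat
        · rintro ⟨F, hF, hsat⟩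
          rw [PolyTeam.only_ne X hk, Team.supF_empty, PolyTeam.only_upd_empty X hk] at hsat
          refine ⟨fun _ => Set.univ, fun s _ => ⟨s 0, Set.mem_univ _⟩, ?_⟩
          apply (ihφ _).mpr
          rw [PolyTeam.upd_only_ne X _ (Ne.symm hk)]
          exact hsat
  | all k x φ ihφ =>
      intro X
      simp only [PFO.relv, PFO.Sat]
      by_cases hk : k = i
      · subst hk
        rw [ihφ _, PolyTeam.only_self, PolyTeam.upd_only_self]
      · rw [ihφ _, PolyTeam.upd_only_ne X _ (Ne.symm hk),
            PolyTeam.only_ne X hk, Team.sup_empty, PolyTeam.only_upd_empty X hk]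

/-- Conjunction, over a list of sorts `i`, of the local disjunctions
`(φ|ᵢ) ∨ⁱ (ψ|ᵢ)` of the relativizations of `φ` and `ψ` to sort `i`. -/
def bigLor {τ : Type} {ar : τ → ℕ} (φ ψ : PFO τ ar Empty) : List ℕ → PFO τ ar Empty
  | [] => .eq 0 0 0
  | i :: l => .and (.lor i (PFO.relv i φ) (PFO.relv i ψ)) (bigLor φ ψ l)

lemma bigLor_noGlobalOr {τ : Type} {ar : τ → ℕ} (φ ψ : PFO τ ar Empty)
    (hφ : φ.noGlobalOr) (hψ : ψ.noGlobalOr) :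
    ∀ l : List ℕ, (bigLor φ ψ l).noGlobalOr
  | [] => trivial
  | i :: l => ⟨⟨relv_noGlobalOr i φ hφ, relv_noGlobalOr i ψ hψ⟩,
      bigLor_noGlobalOr φ ψ hφ hψ l⟩

lemma sat_bigLor {τ : Type} {ar : τ → ℕ} {A : Type} (M : Struc τ ar A)
    (φ ψ : PFO τ ar Empty) :
    ∀ (l : List ℕ) (X : PolyTeam A),
      PFO.Sat noAtoms M (bigLor φ ψ l) X ↔
        ∀ i ∈ l, PFO.Sat noAtoms M (.lor i (PFO.relv i φ) (PFO.relv i ψ)) X := by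
  intro l
  induction l with
  | nil => intro X; simp [bigLor, PFO.Sat]
  | cons i l ih =>
      intro X
      simp only [bigLor, PFO.Sat, ih X, List.mem_cons]
      constructor
      · rintro ⟨h1, h2⟩ k hk
        rcases hk with hk | hk
        · subst hk; exact h1
        · exact h2 k hk
      · intro h
        exact ⟨h i (Or.inl rfl), fun k hk => h k (Or.inr hk)⟩

/-- The key step: eliminating one global disjunction whose disjuncts have no
global disjunctions. -/
lemma or_elim {τ : Type} {ar : τ → ℕ} {A : Type} (M : Struc τ ar A)
    (φ ψ φ' ψ' : PFO τ ar Empty)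
    (hφ' : φ'.noGlobalOr) (hψ' : ψ'.noGlobalOr)
    (eφ : ∀ X : PolyTeam A, PFO.Sat noAtoms M φ X ↔ PFO.Sat noAtoms M φ' X)
    (eψ : ∀ X : PolyTeam A, PFO.Sat noAtoms M ψ X ↔ PFO.Sat noAtoms M ψ' X)
    (X : PolyTeam A) :
    PFO.Sat noAtoms M (.or φ ψ) X ↔
      PFO.Sat noAtoms M (bigLor φ' ψ' (φ'.sorts ++ ψ'.sorts)) X := by
  rw [sat_bigLor]
  constructor
  · rintro ⟨Y, Z, hcov, hY, hZ⟩ i _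
    simp only [PFO.Sat]
    refine ⟨Y i, Z i, hcov i, ?_, ?_⟩
    · rw [sat_relv, PolyTeam.upd_only_eq]
      exact (sat_only M φ' hφ' Y).mp ((eφ Y).mp hY) i
    · rw [sat_relv, PolyTeam.upd_only_eq]
      exact (sat_only M ψ' hψ' Z).mp ((eψ Z).mp hZ) i
  · intro h
    have H : ∀ i : ℕ, ∃ Y Z : Team A, Y ∪ Z = X i ∧
        (i ∈ φ'.sorts ++ ψ'.sorts →
          PFO.Sat noAtoms M φ' ((X.upd i Y).only i) ∧
          PFO.Sat noAtoms M ψ' ((X.upd i Z).only i)) := by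
      intro i
      by_cases hi : i ∈ φ'.sorts ++ ψ'.sorts
      · obtain ⟨Y, Z, hYZ, hY, hZ⟩ := h i hi
        exact ⟨Y, Z, hYZ, fun _ => ⟨(sat_relv M i φ' _).mp hY, (sat_relv M i ψ' _).mp hZ⟩⟩
      · exact ⟨X i, X i, Set.union_self _, fun hh => absurd hh hi⟩
    choose YY ZZ hcov hsat using H
    refine ⟨YY, ZZ, hcov, ?_, ?_⟩
    · apply (eφ _).mpr
      apply (sat_only M φ' hφ' YY).mpr
      intro i
      by_cases hi : i ∈ φ'.sorts ++ ψ'.sorts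
      · have := (hsat i hi).1
        rwa [PolyTeam.upd_only_eq] at this
      · apply sat_empty
        intro k hk
        have hk' : k ≠ i := fun hh => hi (hh ▸ List.mem_append_left _ hk)
        exact PolyTeam.only_ne YY hk'
    · apply (eψ _).mpr
      apply (sat_only M ψ' hψ' ZZ).mpr
      intro i
      by_cases hi : i ∈ φ'.sorts ++ ψ'.sorts
      · have := (hsat i hi).2
        rwa [PolyTeam.upd_only_eq] at this
      · apply sat_empty
        intro k hk
        have hk' : k ≠ i := fun hh => hi (hh ▸ List.mem_append_right _ hk)
        exact PolyTeam.only_ne ZZ hk'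

/-- Elimination of global disjunction: every `PFO` formula is equivalent to a
`PFO` formula using only local disjunctions `∨ⁱ`. -/
theorem PFO_eliminate_global_or (τ : Type) (ar : τ → ℕ) (φ : PFO τ ar Empty) :
    ∃ φ' : PFO τ ar Empty, φ'.noGlobalOr ∧
      ∀ (A : Type) (M : Struc τ ar A) (X : PolyTeam A),
        PFO.Sat noAtoms M φ X ↔ PFO.Sat noAtoms M φ' X := by
  induction φ with
  | atom a => exact a.elim
  | eq i x y => exact ⟨.eq i x y, trivial, fun _ _ _ => Iff.rfl⟩
  | neq i x y => exact ⟨.neq i x y, trivial, fun _ _ _ => Iff.rfl⟩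
  | rel r i vs => exact ⟨.rel r i vs, trivial, fun _ _ _ => Iff.rfl⟩
  | nrel r i vs => exact ⟨.nrel r i vs, trivial, fun _ _ _ => Iff.rfl⟩
  | and φ ψ ihφ ihψ =>
      obtain ⟨φ', hφ', eφ⟩ := ihφ
      obtain ⟨ψ', hψ', eψ⟩ := ihψ
      refine ⟨.and φ' ψ', ⟨hφ', hψ'⟩, fun A M X => ?_⟩
      simp only [PFO.Sat]
      rw [eφ A M X, eψ A M X]
  | or φ ψ ihφ ihψ =>
      obtain ⟨φ', hφ', eφ⟩ := ihφ
      obtain ⟨ψ', hψ', eψ⟩ := ihψ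
      exact ⟨bigLor φ' ψ' (φ'.sorts ++ ψ'.sorts),
        bigLor_noGlobalOr φ' ψ' hφ' hψ' _,
        fun A M X => or_elim M φ ψ φ' ψ' hφ' hψ' (eφ A M) (eψ A M) X⟩
  | lor j φ ψ ihφ ihψ =>
      obtain ⟨φ', hφ', eφ⟩ := ihφ
      obtain ⟨ψ', hψ', eψ⟩ := ihψ
      refine ⟨.lor j φ' ψ', ⟨hφ', hψ'⟩, fun A M X => ?_⟩
      simp only [PFO.Sat]
      constructor
      · rintro ⟨Y, Z, h1, h2, h3⟩
        exact ⟨Y, Z, h1, (eφ A M _).mp h2, (eψ A M _).mp h3⟩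
      · rintro ⟨Y, Z, h1, h2, h3⟩
        exact ⟨Y, Z, h1, (eφ A M _).mpr h2, (eψ A M _).mpr h3⟩
  | ex i x φ ihφ =>
      obtain ⟨φ', hφ', eφ⟩ := ihφ
      refine ⟨.ex i x φ', hφ', fun A M X => ?_⟩
      simp only [PFO.Sat]
      exact exists_congr fun F => and_congr_right fun _ => eφ A M _
  | all i x φ ihφ =>
      obtain ⟨φ', hφ', eφ⟩ := ihφ
      refine ⟨.all i x φ', hφ', fun A M X => ?_⟩
      exact eφ A M _
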